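/- For α, β > 0 the function γ(t) = e^{-β|t|}[cos(αt) + (β/α)·sin(α|t|)] is twice continuously differentiable at 0, with γ'(0) = 0 and γ''(0) = −(α² + β²). -/

import Mathlib

open Real Filter

private lemma aux_F_deriv (α β t : ℝ) :
    HasDerivAt (fun s : ℝ => Real.exp (-β * s) * (Real.cos (α * s) + (β / α) * Real.sin (α * s)))
      (Real.exp (-β * t) * (-β) * (Real.cos (α * t) + (β / α) * Real.sin (α * t))
        + Real.exp (-β * t) * (-Real.sin (α * t) * α + (β / α) * (Real.cos (α * t) * α))) t := by
  have he : HasDerivAt (fun s : ℝ => Real.exp (-β * s)) (Real.exp (-β * t) * (-β)) t := by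
    simpa using HasDerivAt.exp ((hasDerivAt_id t).const_mul (-β))
  have hc : HasDerivAt (fun s : ℝ => Real.cos (α * s)) (-Real.sin (α * t) * α) t := by
    simpa using HasDerivAt.cos ((hasDerivAt_id t).const_mul α)
  have hs : HasDerivAt (fun s : ℝ => Real.sin (α * s)) (Real.cos (α * t) * α) t := by
    simpa using HasDerivAt.sin ((hasDerivAt_id t).const_mul α)
  exact he.mul (hc.add (hs.const_mul (β / α)))

private lemma aux_F2_deriv (α β t : ℝ) :
    HasDerivAt (fun s : ℝ => Real.exp (β * s) * (Real.cos (α * s) - (β / α) * Real.sin (α * s)))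
      (Real.exp (β * t) * β * (Real.cos (α * t) - (β / α) * Real.sin (α * t))
        + Real.exp (β * t) * (-Real.sin (α * t) * α - (β / α) * (Real.cos (α * t) * α))) t := by
  have he : HasDerivAt (fun s : ℝ => Real.exp (β * s)) (Real.exp (β * t) * β) t := by
    simpa using HasDerivAt.exp ((hasDerivAt_id t).const_mul β)
  have hc : HasDerivAt (fun s : ℝ => Real.cos (α * s)) (-Real.sin (α * t) * α) t := by
    simpa using HasDerivAt.cos ((hasDerivAt_id t).const_mul α)
  have hs : HasDerivAt (fun s : ℝ => Real.sin (α * s)) (Real.cos (α * t) * α) t := by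
    simpa using HasDerivAt.sin ((hasDerivAt_id t).const_mul α)
  exact he.mul (hc.sub (hs.const_mul (β / α)))

/-- First derivative of γ everywhere. -/
private lemma aux_gamma_deriv (α β : ℝ) (hα : 0 < α) (t : ℝ) :
    HasDerivAt (fun t : ℝ =>
        Real.exp (-β * |t|) * (Real.cos (α * t) + (β / α) * Real.sin (α * |t|)))
      (-((α ^ 2 + β ^ 2) / α) * (Real.exp (-β * |t|) * Real.sin (α * t))) t := by
  have hα' : α ≠ 0 := ne_of_gt hα
  rcases lt_trichotomy t 0 with ht | ht | ht
  · -- t < 0 : γ agrees with F₂ near t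
    have hev : (fun t : ℝ =>
        Real.exp (-β * |t|) * (Real.cos (α * t) + (β / α) * Real.sin (α * |t|)))
        =ᶠ[nhds t] (fun s : ℝ => Real.exp (β * s) * (Real.cos (α * s) - (β / α) * Real.sin (α * s))) := by
      filter_upwards [gt_mem_nhds ht] with s hs
      rw [abs_of_neg hs]
      simp [mul_neg, Real.sin_neg]
      ring
    have := (aux_F2_deriv α β t).congr_of_eventuallyEq hev
    refine this.congr_deriv ?_
    rw [abs_of_neg ht]
    field_simp
    ring
  · -- t = 0 : slope argument
    subst ht
    rw [hasDerivAt_iff_tendsto_slope]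
    have hF0 : HasDerivAt (fun s : ℝ =>
        Real.exp (-β * s) * (Real.cos (α * s) + (β / α) * Real.sin (α * s))) 0 0 := by
      have := aux_F_deriv α β 0
      convert this using 1
      field_simp
      simp
      ring
    have hFslope := hasDerivAt_iff_tendsto_slope.mp hF0
    set F : ℝ → ℝ := fun s => Real.exp (-β * s) * (Real.cos (α * s) + (β / α) * Real.sin (α * s))
      with hF
    have habs : Tendsto (fun s : ℝ => |s|) (nhdsWithin 0 {(0:ℝ)}ᶜ) (nhdsWithin 0 {(0:ℝ)}ᶜ) := by
      apply tendsto_nhdsWithin_of_tendsto_nhds_of_eventually_within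
      · exact (continuous_abs.tendsto' 0 0 abs_zero).mono_left nhdsWithin_le_nhds
      · filter_upwards [self_mem_nhdsWithin] with s hs
        simp only [Set.mem_compl_iff, Set.mem_singleton_iff] at hs ⊢
        exact abs_ne_zero.mpr hs
    have hcomp : Tendsto (fun s : ℝ => slope F 0 |s|) (nhdsWithin 0 {(0:ℝ)}ᶜ) (nhds 0) :=
      hFslope.comp habs
    have key : Tendsto (slope (fun t : ℝ =>
        Real.exp (-β * |t|) * (Real.cos (α * t) + (β / α) * Real.sin (α * |t|))) 0)
        (nhdsWithin 0 {(0:ℝ)}ᶜ) (nhds 0) := by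
      apply squeeze_zero_norm' _ (by simpa using hcomp.norm)
      filter_upwards [self_mem_nhdsWithin] with s hs
      simp only [Set.mem_compl_iff, Set.mem_singleton_iff] at hs
      have hγF : Real.exp (-β * |s|) * (Real.cos (α * s) + (β / α) * Real.sin (α * |s|)) = F |s| := by
        rw [hF]
        congr 2
        rw [show α * |s| = |α * s| by rw [abs_mul, abs_of_pos hα], Real.cos_abs]
      rw [slope_def_field, slope_def_field, hγF]
      have hγF0 : Real.exp (-β * |(0:ℝ)|) * (Real.cos (α * 0) + (β / α) * Real.sin (α * |(0:ℝ)|))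
          = F 0 := by simp [hF]
      rw [hγF0]
      simp [abs_div, abs_abs, sub_zero]
    convert key using 2
    simp
  · -- t > 0 : γ agrees with F near t
    have hev : (fun t : ℝ =>
        Real.exp (-β * |t|) * (Real.cos (α * t) + (β / α) * Real.sin (α * |t|)))
        =ᶠ[nhds t] (fun s : ℝ => Real.exp (-β * s) * (Real.cos (α * s) + (β / α) * Real.sin (α * s))) := by
      filter_upwards [lt_mem_nhds ht] with s hs
      rw [abs_of_pos hs]
    have := (aux_F_deriv α β t).congr_of_eventuallyEq hev
    refine this.congr_deriv ?_
    rw [abs_of_pos ht]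
    field_simp
    ring

/-- Second derivative: derivative of g everywhere. -/
private lemma aux_g_deriv (α β : ℝ) (hα : 0 < α) (t : ℝ) :
    HasDerivAt (fun t : ℝ => -((α ^ 2 + β ^ 2) / α) * (Real.exp (-β * |t|) * Real.sin (α * t)))
      (-((α ^ 2 + β ^ 2) / α) *
        (Real.exp (-β * |t|) * (α * Real.cos (α * t) - β * Real.sin (α * |t|)))) t := by
  have hα' : α ≠ 0 := ne_of_gt hα
  have main : HasDerivAt (fun t : ℝ => Real.exp (-β * |t|) * Real.sin (α * t))
      (Real.exp (-β * |t|) * (α * Real.cos (α * t) - β * Real.sin (α * |t|))) t := by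
    rcases lt_trichotomy t 0 with ht | ht | ht
    · have hev : (fun t : ℝ => Real.exp (-β * |t|) * Real.sin (α * t))
          =ᶠ[nhds t] (fun s : ℝ => Real.exp (β * s) * Real.sin (α * s)) := by
        filter_upwards [gt_mem_nhds ht] with s hs
        rw [abs_of_neg hs]; ring_nf
      have he : HasDerivAt (fun s : ℝ => Real.exp (β * s)) (Real.exp (β * t) * β) t := by
        simpa using HasDerivAt.exp ((hasDerivAt_id t).const_mul β)
      have hs : HasDerivAt (fun s : ℝ => Real.sin (α * s)) (Real.cos (α * t) * α) t := by
        simpa using HasDerivAt.sin ((hasDerivAt_id t).const_mul α)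
      have := (he.mul hs).congr_of_eventuallyEq hev
      refine this.congr_deriv ?_
      rw [abs_of_neg ht]
      simp [mul_neg, Real.sin_neg]
      ring
    · subst ht
      rw [hasDerivAt_iff_tendsto_slope]
      have hcont : Continuous fun s : ℝ => Real.exp (-β * |s|) := by continuity
      have h1 : Tendsto (fun s : ℝ => Real.exp (-β * |s|)) (nhdsWithin 0 {(0:ℝ)}ᶜ) (nhds 1) := by
        have h1' : Tendsto (fun s : ℝ => Real.exp (-β * |s|)) (nhdsWithin 0 {(0:ℝ)}ᶜ)
            (nhds (Real.exp (-β * |(0:ℝ)|))) := (hcont.tendsto 0).mono_left nhdsWithin_le_nhds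
        simpa using h1'
      have hsin : HasDerivAt (fun s : ℝ => Real.sin (α * s)) α 0 := by
        simpa using HasDerivAt.sin ((hasDerivAt_id (0:ℝ)).const_mul α)
      have h2 := hasDerivAt_iff_tendsto_slope.mp hsin
      have hmul := h1.mul h2
      rw [one_mul] at hmul
      have heq : (fun x : ℝ => Real.exp (-β * |x|) * slope (fun s : ℝ => Real.sin (α * s)) 0 x)
          =ᶠ[nhdsWithin 0 {(0:ℝ)}ᶜ]
          slope (fun t : ℝ => Real.exp (-β * |t|) * Real.sin (α * t)) 0 := by
        filter_upwards [self_mem_nhdsWithin] with s hs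
        simp only [Set.mem_compl_iff, Set.mem_singleton_iff] at hs
        rw [slope_def_field, slope_def_field]
        simp only [mul_zero, Real.sin_zero, abs_zero, Real.exp_zero, sub_zero]
        ring
      have := Filter.Tendsto.congr' heq hmul
      convert this using 2
      simp
    · have hev : (fun t : ℝ => Real.exp (-β * |t|) * Real.sin (α * t))
          =ᶠ[nhds t] (fun s : ℝ => Real.exp (-β * s) * Real.sin (α * s)) := by
        filter_upwards [lt_mem_nhds ht] with s hs
        rw [abs_of_pos hs]
      have he : HasDerivAt (fun s : ℝ => Real.exp (-β * s)) (Real.exp (-β * t) * (-β)) t := by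
        simpa using HasDerivAt.exp ((hasDerivAt_id t).const_mul (-β))
      have hs : HasDerivAt (fun s : ℝ => Real.sin (α * s)) (Real.cos (α * t) * α) t := by
        simpa using HasDerivAt.sin ((hasDerivAt_id t).const_mul α)
      have := (he.mul hs).congr_of_eventuallyEq hev
      refine this.congr_deriv ?_
      rw [abs_of_pos ht]
      ring
  exact main.const_mul _

/-- γ(t) = e^{-β|t|}[cos(αt) + (β/α) sin(α|t|)] is C² at 0 with γ'(0)=0 and
γ''(0) = −(α²+β²). -/
theorem stmt_3 (α β : ℝ) (hα : 0 < α) (hβ : 0 < β) :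
    let γ : ℝ → ℝ := fun t =>
      Real.exp (-β * |t|) * (Real.cos (α * t) + (β / α) * Real.sin (α * |t|))
    ContDiffAt ℝ 2 γ 0 ∧ deriv γ 0 = 0 ∧ deriv (deriv γ) 0 = -(α ^ 2 + β ^ 2) := by
  intro γ
  have hα' : α ≠ 0 := ne_of_gt hα
  set g : ℝ → ℝ := fun t => -((α ^ 2 + β ^ 2) / α) * (Real.exp (-β * |t|) * Real.sin (α * t))
    with hg
  set h : ℝ → ℝ := fun t => -((α ^ 2 + β ^ 2) / α) *
      (Real.exp (-β * |t|) * (α * Real.cos (α * t) - β * Real.sin (α * |t|))) with hh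
  have hdγ : ∀ t, HasDerivAt γ (g t) t := fun t => aux_gamma_deriv α β hα t
  have hdg : ∀ t, HasDerivAt g (h t) t := fun t => aux_g_deriv α β hα t
  have hderivγ : deriv γ = g := funext fun t => (hdγ t).deriv
  have hderivg : deriv g = h := funext fun t => (hdg t).deriv
  refine ⟨?_, ?_, ?_⟩
  · have : ContDiff ℝ 2 γ := by
      rw [show (2 : WithTop ℕ∞) = 1 + 1 from rfl, contDiff_succ_iff_deriv]
      refine ⟨fun t => (hdγ t).differentiableAt, by simp, ?_⟩
      rw [hderivγ, contDiff_one_iff_deriv]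
      refine ⟨fun t => (hdg t).differentiableAt, ?_⟩
      rw [hderivg, hh]
      fun_prop
    exact this.contDiffAt
  · rw [hderivγ, hg]; simp
  · rw [hderivγ, hderivg, hh]
    simp only [abs_zero, mul_zero, neg_zero, Real.exp_zero, Real.cos_zero, Real.sin_zero,
      mul_one, sub_zero, one_mul]
    field_simp
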